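/- Let (I,J) be a Krasner factorization of ℤ/nℤ with Card(J) > 1 defined by a chain of divisors of length s > 1. Then J = {0, 1, ..., k₁−1} + J' where k₁ > 1 divides n, all elements of I and J' are divisible by k₁, and (I/k₁, J'/k₁) is a Krasner factorization of ℤ/(n/k₁)ℤ. -/

import Mathlib

open Polynomial

/-- `(I, J)` is a Krasner factorization of `ℤ/nℤ`: every `z ∈ {0, …, n-1}` has a
unique representation `z = i + j` (exact equality in `ℤ`) with `i ∈ I`, `j ∈ J`. -/
def IsKrasnerFactorization (n : ℕ) (I J : Finset ℕ) : Prop :=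
  ∀ z < n, ∃! p : ℕ × ℕ, p.1 ∈ I ∧ p.2 ∈ J ∧ p.1 + p.2 = z

/-- For a finite set `S ⊆ ℕ`, the polynomial `a^S = Σ_{s ∈ S} a^s ∈ ℤ[a]`. -/
noncomputable def polyOf (S : Finset ℕ) : Polynomial ℤ :=
  ∑ s ∈ S, Polynomial.X ^ s

/-- `(a^{d·k} − 1)/(a^k − 1) = 1 + a^k + a^{2k} + ⋯ + a^{(d-1)k}`. -/
noncomputable def geomPoly (d k : ℕ) : Polynomial ℤ :=
  ∑ i ∈ Finset.range d, Polynomial.X ^ (i * k)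

/-- `a^I = Π_{j even, 1 ≤ j ≤ s} (a^{k_j}−1)/(a^{k_{j−1}}−1)`. -/
noncomputable def krasnerPolyEven (s : ℕ) (k : ℕ → ℕ) : Polynomial ℤ :=
  ∏ j ∈ Finset.range s,
    if (j + 1) % 2 = 0 then geomPoly (k (j + 1) / k j) (k j) else 1

/-- `a^J = Π_{j odd, 1 ≤ j ≤ s} (a^{k_j}−1)/(a^{k_{j−1}}−1)`. -/
noncomputable def krasnerPolyOdd (s : ℕ) (k : ℕ → ℕ) : Polynomial ℤ :=
  ∏ j ∈ Finset.range s,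
    if (j + 1) % 2 = 1 then geomPoly (k (j + 1) / k j) (k j) else 1

lemma polyOf_coeff (S : Finset ℕ) (m : ℕ) :
    (polyOf S).coeff m = if m ∈ S then 1 else 0 := by
  simp [polyOf, finset_sum_coeff, coeff_X_pow]

lemma geomPoly_expand (k1 d m : ℕ) (hk : 0 < k1) (h : k1 ∣ m) :
    geomPoly d m = Polynomial.expand ℤ k1 (geomPoly d (m / k1)) := by
  obtain ⟨c, rfl⟩ := h
  rw [Nat.mul_div_cancel_left _ hk]
  simp only [geomPoly, map_sum, map_pow, Polynomial.expand_X, ← pow_mul]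
  apply Finset.sum_congr rfl
  intro i _
  ring_nf

lemma key_coeff (k1 : ℕ) (hk : 0 < k1) (F : Polynomial ℤ) (z : ℕ) :
    (geomPoly k1 1 * Polynomial.expand ℤ k1 F).coeff z = F.coeff (z / k1) := by
  have hrw : geomPoly k1 1 * Polynomial.expand ℤ k1 F
      = ∑ u ∈ Finset.range k1, Polynomial.expand ℤ k1 F * X ^ u := by
    rw [geomPoly, Finset.sum_mul]
    exact Finset.sum_congr rfl fun i _ => by rw [mul_one, mul_comm]
  rw [hrw, finset_sum_coeff]
  rw [Finset.sum_eq_single (z % k1)]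
  · have h1 : z - z % k1 = k1 * (z / k1) := by
      have := Nat.div_add_mod z k1; omega
    rw [coeff_mul_X_pow', if_pos (Nat.mod_le z k1), h1, coeff_expand hk,
      if_pos (Dvd.intro _ rfl), Nat.mul_div_cancel_left _ hk]
  · intro u hu hne
    simp only [Finset.mem_range] at hu
    rw [coeff_mul_X_pow']
    split
    · rename_i hle
      rw [coeff_expand hk, if_neg]
      rintro ⟨c, hc⟩
      have hz : z = u + k1 * c := by omega
      rw [hz, Nat.add_mul_mod_self_left, Nat.mod_eq_of_lt hu] at hne
      exact hne rfl
    · rfl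
  · intro h
    exact absurd (Finset.mem_range.mpr (Nat.mod_lt z hk)) h


/-- Let `(I, J)` be a Krasner factorization of `ℤ/nℤ` with `Card(J) > 1`, defined by
a chain of divisors `1 = k₀ ∣ k₁ ∣ ⋯ ∣ k_s = n` of length `s > 1`.  Then
`J = {0, 1, …, k₁−1} + J'` where `k₁ > 1` divides `n`, all elements of `I` and of
`J'` are divisible by `k₁`, and `(I/k₁, J'/k₁)` is a Krasner factorization of
`ℤ/(n/k₁)ℤ`. -/
theorem krasner_structure (n : ℕ) (hn : 0 < n) (I J : Finset ℕ)
    (hK : IsKrasnerFactorization n I J) (hJcard : 1 < J.card)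
    (s : ℕ) (k : ℕ → ℕ) (hs : 1 < s)
    (hk0 : k 0 = 1) (hks : k s = n)
    (hdvd : ∀ j < s, k j ∣ k (j + 1)) (hne : ∀ j < s, k j ≠ k (j + 1))
    (hI : polyOf I = krasnerPolyEven s k) (hJ : polyOf J = krasnerPolyOdd s k) :
    ∃ J' : Finset ℕ, 1 < k 1 ∧ k 1 ∣ n ∧
      (∀ j : ℕ, j ∈ J ↔ ∃ u < k 1, ∃ j' ∈ J', j = u + j') ∧
      (∀ i ∈ I, k 1 ∣ i) ∧ (∀ j' ∈ J', k 1 ∣ j') ∧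
      IsKrasnerFactorization (n / k 1) (I.image (· / k 1)) (J'.image (· / k 1)) := by
  -- chain divisibility
  have htrans : ∀ b, b ≤ s → ∀ a, a ≤ b → k a ∣ k b := by
    intro b
    induction b with
    | zero => intro _ a ha; have h0 : a = 0 := by omega
              rw [h0]
    | succ m ih =>
      intro hb a ha
      rcases Nat.lt_or_ge a (m + 1) with h | h
      · exact (ih (by omega) a (by omega)).trans (hdvd m (by omega))
      · have : a = m + 1 := by omega
        rw [this]
  have hk1n : k 1 ∣ n := hks ▸ htrans s le_rfl 1 (by omega)
  have hk1pos : 0 < k 1 := Nat.pos_of_dvd_of_pos hk1n hn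
  have hk1gt : 1 < k 1 := by
    have h1 : (1 : ℕ) ≠ k 1 := by simpa [hk0] using hne 0 (by omega)
    omega
  set F : Polynomial ℤ := ∏ j ∈ Finset.Ico 1 s,
      if (j + 1) % 2 = 1 then geomPoly (k (j + 1) / k j) (k j / k 1) else 1 with hF
  set E : Polynomial ℤ := ∏ j ∈ Finset.range s,
      if (j + 1) % 2 = 0 then geomPoly (k (j + 1) / k j) (k j / k 1) else 1 with hE
  have hJpoly : polyOf J = geomPoly (k 1) 1 * Polynomial.expand ℤ (k 1) F := by
    rw [hJ, krasnerPolyOdd, Finset.range_eq_Ico,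
      Finset.prod_eq_prod_Ico_succ_bot (by omega : 0 < s)]
    congr 1
    · simp [hk0]
    · rw [hF, map_prod]
      apply Finset.prod_congr rfl
      intro j hj
      simp only [Finset.mem_Ico] at hj
      split
      · exact geomPoly_expand _ _ _ hk1pos (htrans j (le_of_lt hj.2) 1 hj.1)
      · simp
  have hIpoly : polyOf I = Polynomial.expand ℤ (k 1) E := by
    rw [hI, krasnerPolyEven, hE, map_prod]
    apply Finset.prod_congr rfl
    intro j hj
    simp only [Finset.mem_range] at hj
    by_cases h : (j + 1) % 2 = 0
    · rw [if_pos h, if_pos h]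
      have hj1 : 1 ≤ j := by omega
      exact geomPoly_expand _ _ _ hk1pos (htrans j (le_of_lt hj) 1 hj1)
    · rw [if_neg h, if_neg h, map_one]
  have hmemJ : ∀ j, j ∈ J ↔ F.coeff (j / k 1) ≠ 0 := by
    intro j
    have h2 : F.coeff (j / k 1) = if j ∈ J then 1 else 0 := by
      rw [← key_coeff (k 1) hk1pos F j, ← hJpoly, polyOf_coeff]
    by_cases hj : j ∈ J <;> simp [hj] at h2 ⊢ <;> simp [h2]
  set J' : Finset ℕ := F.support.image (· * k 1) with hJ'
  have hiff : ∀ j : ℕ, j ∈ J ↔ ∃ u < k 1, ∃ j' ∈ J', j = u + j' := by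
    intro j
    rw [hmemJ]
    constructor
    · intro h
      exact ⟨j % k 1, Nat.mod_lt _ hk1pos, j / k 1 * k 1,
        Finset.mem_image.mpr ⟨j / k 1, Polynomial.mem_support_iff.mpr h, rfl⟩,
        (Nat.mod_add_div' j (k 1)).symm⟩
    · rintro ⟨u, hu, j', hj', rfl⟩
      obtain ⟨m, hm, rfl⟩ := Finset.mem_image.mp hj'
      have hq : (u + m * k 1) / k 1 = m := by
        rw [Nat.add_mul_div_right _ _ hk1pos, Nat.div_eq_of_lt hu, zero_add]
      rw [hq]
      exact Polynomial.mem_support_iff.mp hm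
  have hIdvd : ∀ i ∈ I, k 1 ∣ i := by
    intro i hi
    by_contra hnd
    have h := polyOf_coeff I i
    rw [hIpoly, coeff_expand hk1pos, if_neg hnd, if_pos hi] at h
    exact one_ne_zero h.symm
  have hJ'dvd : ∀ j' ∈ J', k 1 ∣ j' := by
    intro j' hj'
    obtain ⟨m, _, rfl⟩ := Finset.mem_image.mp hj'
    exact dvd_mul_left (k 1) m
  have hJ'subJ : ∀ j' ∈ J', j' ∈ J := fun j' hj' =>
    (hiff j').mpr ⟨0, hk1pos, j', hj', (zero_add _).symm⟩
  refine ⟨J', hk1gt, hk1n, hiff, hIdvd, hJ'dvd, ?_⟩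
  intro z hz
  obtain ⟨c, hc⟩ := hk1n
  have hcz : n / k 1 = c := by rw [hc, Nat.mul_div_cancel_left _ hk1pos]
  rw [hcz] at hz
  have hzn : k 1 * z < n := by
    rw [hc]
    exact mul_lt_mul_of_pos_left hz hk1pos
  obtain ⟨⟨i, j⟩, ⟨hiI, hjJ, hsum⟩, huniq⟩ := hK (k 1 * z) hzn
  simp only at hiI hjJ hsum
  obtain ⟨u, hu, j', hj'J', hju⟩ := (hiff j).mp hjJ
  obtain ⟨a, rfl⟩ := hIdvd i hiI
  obtain ⟨b, rfl⟩ := hJ'dvd j' hj'J'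
  have hu0 : u = 0 := by
    have he : k 1 * a + (u + k 1 * b) = k 1 * z := by rw [← hju]; exact hsum
    have hdu : k 1 ∣ u := by
      have h3 := Nat.dvd_sub (Dvd.intro z rfl)
        (dvd_add (Dvd.intro a rfl) (Dvd.intro b rfl) :
          k 1 ∣ k 1 * a + k 1 * b)
      have h4 : u = k 1 * z - (k 1 * a + k 1 * b) := by omega
      rw [h4]
      exact h3
    exact Nat.eq_zero_of_dvd_of_lt hdu hu
  rw [hu0, zero_add] at hju
  subst hju
  have hab : a + b = z := by
    have h5 : k 1 * (a + b) = k 1 * z := by rw [Nat.mul_add]; exact hsum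
    exact Nat.eq_of_mul_eq_mul_left hk1pos h5
  refine ⟨(a, b), ⟨?_, ?_, hab⟩, ?_⟩
  · exact Finset.mem_image.mpr ⟨k 1 * a, hiI, by
      simp [Nat.mul_div_cancel_left _ hk1pos]⟩
  · exact Finset.mem_image.mpr ⟨k 1 * b, hj'J', by
      simp [Nat.mul_div_cancel_left _ hk1pos]⟩
  · rintro ⟨a2, b2⟩ ⟨ha2, hb2, hab2⟩
    simp only at ha2 hb2 hab2
    obtain ⟨i2, hi2I, hi2⟩ := Finset.mem_image.mp ha2
    obtain ⟨j2, hj2J', hj2⟩ := Finset.mem_image.mp hb2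
    have hi2e : i2 = k 1 * a2 := by
      obtain ⟨c2, rfl⟩ := hIdvd i2 hi2I
      rw [Nat.mul_div_cancel_left _ hk1pos] at hi2
      rw [hi2]
    have hj2e : j2 = k 1 * b2 := by
      obtain ⟨c2, rfl⟩ := hJ'dvd j2 hj2J'
      rw [Nat.mul_div_cancel_left _ hk1pos] at hj2
      rw [hj2]
    have hpair := huniq (i2, j2) ⟨hi2I, hJ'subJ j2 hj2J', by
      simp only [hi2e, hj2e, ← Nat.mul_add, hab2]⟩
    rw [Prod.mk.injEq] at hpair ⊢
    constructor
    · exact Nat.eq_of_mul_eq_mul_left hk1pos (hi2e ▸ hpair.1)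
    · exact Nat.eq_of_mul_eq_mul_left hk1pos (hj2e ▸ hpair.2)
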